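/- Let G be a commutative linearly ordered group. Then the following are equivalent: (i) G is archimedean; (ii) every non-trivial congruence on S_G is a group congruence; (iii) every non-trivial congruence on S_G⁺ is a group congruence. -/

import Mathlib

variable {G : Type*} [Group G] [LinearOrder G]
  [CovariantClass G G (· * ·) (· ≤ ·)] [CovariantClass G G (Function.swap (· * ·)) (· ≤ ·)]

/-- The multiplication of the semigroup `S_G` on `G × G`:
`(a,b)·(c,d) = (c·b⁻¹·a, d)` if `b < c`; `(a,d)` if `b = c`; `(a, b·c⁻¹·d)` if `b > c`. -/
def Smul (x y : G × G) : G × G :=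
  if x.2 < y.1 then (y.1 * x.2⁻¹ * x.1, y.2)
  else if x.2 = y.1 then (x.1, y.2)
  else (x.1, x.2 * y.1⁻¹ * y.2)

/-- The carrier of the semigroup `S_G⁺` on the positive cone `G⁺ = {x | 1 ≤ x}`. -/
abbrev PosS (G : Type*) [Group G] [LinearOrder G] : Type _ :=
  {p : G × G // 1 ≤ p.1 ∧ 1 ≤ p.2}

theorem smul_mem {x y : G × G} (hx : 1 ≤ x.1 ∧ 1 ≤ x.2) (hy : 1 ≤ y.1 ∧ 1 ≤ y.2) :
    1 ≤ (Smul x y).1 ∧ 1 ≤ (Smul x y).2 := by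
  unfold Smul
  split_ifs with h1 h2
  · refine ⟨?_, hy.2⟩
    have h3 : (1 : G) ≤ y.1 * x.2⁻¹ := by
      have h4 := mul_le_mul_left h1.le x.2⁻¹
      rwa [mul_inv_cancel] at h4
    exact one_le_mul h3 hx.1
  · exact ⟨hx.1, hy.2⟩
  · refine ⟨hx.1, ?_⟩
    have h3 : (1 : G) ≤ x.2 * y.1⁻¹ := by
      have h4 := mul_le_mul_left (not_lt.mp h1) y.1⁻¹
      rwa [mul_inv_cancel] at h4
    exact one_le_mul h3 hy.2

/-- The multiplication of the semigroup `S_G⁺`. -/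
def SmulP (x y : PosS G) : PosS G := ⟨Smul x.1 y.1, smul_mem x.2 y.2⟩

/-- `c` is a congruence on the semigroup `(S, m)` : an equivalence relation compatible
with multiplication on both sides. -/
def IsSgCongruence {S : Type*} (m : S → S → S) (c : S → S → Prop) : Prop :=
  Equivalence c ∧ ∀ x y s : S, c x y → c (m s x) (m s y) ∧ c (m x s) (m y s)

/-- `c` differs from both the identity relation and the universal relation. -/
def IsNontrivialRel {S : Type*} (c : S → S → Prop) : Prop :=
  (∃ x y : S, c x y ∧ x ≠ y) ∧ ∃ x y : S, ¬c x y

/-- The quotient of the semigroup `(S, m)` by the congruence `c` is a group: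
there is a class acting as a two-sided identity and every class has a two-sided inverse. -/
def IsGroupCongruence {S : Type*} (m : S → S → S) (c : S → S → Prop) : Prop :=
  ∃ e : S, (∀ x : S, c (m e x) x ∧ c (m x e) x) ∧ ∀ x : S, ∃ y : S, c (m x y) e ∧ c (m y x) e

/-- A linearly ordered group is archimedean if for all `1 < a` and `1 < b` there are
positive integers `m`, `n` with `b ≤ a ^ m` and `a ≤ b ^ n`. -/
def IsArchGroup (G : Type*) [Group G] [LinearOrder G] : Prop :=
  ∀ a b : G, 1 < a → 1 < b →
    (∃ m : ℕ, 0 < m ∧ b ≤ a ^ m) ∧ ∃ n : ℕ, 0 < n ∧ a ≤ b ^ n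

section MyAux
variable {G : Type*} [CommGroup G] [LinearOrder G] [IsOrderedMonoid G]

lemma sgEq (u a v : G) : Smul (u, a) (a, v) = (u, v) := by
  simp [Smul]

lemma sgLt {b c : G} (a d : G) (h : b < c) : Smul (a, b) (c, d) = (c * b⁻¹ * a, d) := by
  simp [Smul, h]

lemma sgGt {b c : G} (a d : G) (h : c < b) : Smul (a, b) (c, d) = (a, b * c⁻¹ * d) := by
  simp [Smul, not_lt.2 h.le, h.ne']

lemma sgMax (x y : G × G) :
    Smul x y = (x.1 * x.2⁻¹ * (x.2 ⊔ y.1), y.2 * y.1⁻¹ * (x.2 ⊔ y.1)) := by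
  obtain ⟨a, b⟩ := x; obtain ⟨c, d⟩ := y
  rcases lt_trichotomy b c with h | h | h
  · rw [sgLt a d h, Prod.mk.injEq]
    rw [sup_eq_right.2 h.le]
    exact ⟨by simp [mul_assoc, mul_comm, mul_left_comm], by simp⟩
  · subst h
    rw [sgEq, Prod.mk.injEq]
    exact ⟨by simp, by simp⟩
  · rw [sgGt a d h, Prod.mk.injEq]
    rw [sup_eq_left.2 h.le]
    exact ⟨by simp, by simp [mul_assoc, mul_comm, mul_left_comm]⟩

lemma sgAssoc (x y z : G × G) : Smul (Smul x y) z = Smul x (Smul y z) := by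
  obtain ⟨x1, x2⟩ := x; obtain ⟨y1, y2⟩ := y; obtain ⟨z1, z2⟩ := z
  simp only [sgMax]
  have hN : (y2 * y1⁻¹ * (x2 ⊔ y1)) ⊔ z1
      = y2 * y1⁻¹ * ((x2 ⊔ y1) ⊔ y1 * y2⁻¹ * z1) := by
    rw [mul_sup (x2 ⊔ y1) (y1 * y2⁻¹ * z1) (y2 * y1⁻¹)]
    congr 1
    simp [mul_assoc, mul_comm, mul_left_comm]
  have hQ : x2 ⊔ (y1 * y2⁻¹ * (y2 ⊔ z1)) = (x2 ⊔ y1) ⊔ y1 * y2⁻¹ * z1 := by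
    rw [mul_sup y2 z1 (y1 * y2⁻¹)]
    have h1 : y1 * y2⁻¹ * y2 = y1 := by simp
    rw [h1, ← sup_assoc]
  rw [Prod.mk.injEq]
  constructor
  · rw [hN, hQ]
    group
  · rw [hN, hQ]
    group

end MyAux

section MyAux2
variable {G : Type*} [CommGroup G] [LinearOrder G] [IsOrderedMonoid G]

/-- The convex hull of the cyclic subgroup generated by `α`. -/
def HH (α x : G) : Prop := ∃ n : ℕ, x ≤ α ^ n ∧ x⁻¹ ≤ α ^ n

/-- The coset relation modulo `HH α`, coordinatewise. -/
def crel (α : G) (p q : G × G) : Prop := HH α (p.1⁻¹ * q.1) ∧ HH α (p.2⁻¹ * q.2)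

variable {α : G}

lemma HH_one : HH α 1 := ⟨0, by simp⟩

lemma HH_inv {x : G} (h : HH α x) : HH α x⁻¹ := by
  obtain ⟨n, h1, h2⟩ := h
  exact ⟨n, h2, by simpa using h1⟩

lemma HH_mul {x y : G} (hx : HH α x) (hy : HH α y) : HH α (x * y) := by
  obtain ⟨n, h1, h2⟩ := hx
  obtain ⟨k, h3, h4⟩ := hy
  refine ⟨n + k, ?_, ?_⟩
  · rw [pow_add]; exact mul_le_mul' h1 h3
  · rw [pow_add, mul_inv]; exact mul_le_mul' h2 h4

lemma HH_up (hα : 1 ≤ α) {x h : G} (hh : HH α h) (h1 : 1 ≤ x) (h2 : x ≤ h) : HH α x := by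
  obtain ⟨n, hn1, -⟩ := hh
  exact ⟨n, h2.trans hn1, (inv_le_one'.2 h1).trans (one_le_pow_of_one_le' hα n)⟩

lemma HH_dn (hα : 1 ≤ α) {x h : G} (hh : HH α h) (h1 : h ≤ x) (h2 : x ≤ 1) : HH α x := by
  obtain ⟨n, -, hn2⟩ := hh
  exact ⟨n, h2.trans (one_le_pow_of_one_le' hα n), (inv_le_inv_iff.2 h1).trans hn2⟩

lemma HH_ratio (hα : 1 ≤ α) (u v : G) {h : G} (hh : HH α h) :
    HH α ((u ⊔ v)⁻¹ * (u ⊔ v * h)) := by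
  rcases le_total u v with h1 | h1 <;> rcases le_total u (v * h) with h2 | h2
  · rw [sup_eq_right.2 h1, sup_eq_right.2 h2, inv_mul_cancel_left]
    exact hh
  · rw [sup_eq_right.2 h1, sup_eq_left.2 h2]
    refine HH_dn hα hh ?_ ?_
    · rwa [le_inv_mul_iff_mul_le]
    · simpa using mul_le_mul_right h1 v⁻¹
  · rw [sup_eq_left.2 h1, sup_eq_right.2 h2]
    refine HH_up hα hh ?_ ?_
    · simpa using mul_le_mul_right h2 u⁻¹
    · have h3 : u⁻¹ * v ≤ 1 := by simpa using mul_le_mul_right h1 u⁻¹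
      calc u⁻¹ * (v * h) = u⁻¹ * v * h := (mul_assoc _ _ _).symm
        _ ≤ 1 * h := mul_le_mul_left h3 h
        _ = h := one_mul h
  · rw [sup_eq_left.2 h1, sup_eq_left.2 h2, inv_mul_cancel]
    exact HH_one

lemma crel_refl (p : G × G) : crel α p p :=
  ⟨by rw [inv_mul_cancel]; exact HH_one, by rw [inv_mul_cancel]; exact HH_one⟩

lemma crel_symm {p q : G × G} (h : crel α p q) : crel α q p := by
  obtain ⟨h1, h2⟩ := h
  constructor
  · have := HH_inv h1; rwa [mul_inv_rev, inv_inv] at this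
  · have := HH_inv h2; rwa [mul_inv_rev, inv_inv] at this

lemma crel_trans {p q r : G × G} (h : crel α p q) (h' : crel α q r) : crel α p r := by
  obtain ⟨h1, h2⟩ := h
  obtain ⟨h3, h4⟩ := h'
  constructor
  · have := HH_mul h1 h3
    rwa [show p.1⁻¹ * q.1 * (q.1⁻¹ * r.1) = p.1⁻¹ * r.1 by group] at this
  · have := HH_mul h2 h4
    rwa [show p.2⁻¹ * q.2 * (q.2⁻¹ * r.2) = p.2⁻¹ * r.2 by group] at this

lemma crel_left (hα : 1 ≤ α) (s : G × G) {p q : G × G} (h : crel α p q) :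
    crel α (Smul s p) (Smul s q) := by
  obtain ⟨h1, h2⟩ := h
  rw [sgMax s p, sgMax s q]
  constructor
  · show HH α ((s.1 * s.2⁻¹ * (s.2 ⊔ p.1))⁻¹ * (s.1 * s.2⁻¹ * (s.2 ⊔ q.1)))
    rw [show (s.1 * s.2⁻¹ * (s.2 ⊔ p.1))⁻¹ * (s.1 * s.2⁻¹ * (s.2 ⊔ q.1))
        = (s.2 ⊔ p.1)⁻¹ * (s.2 ⊔ q.1) by group]
    have h1' := HH_ratio hα s.2 p.1 h1
    rwa [mul_inv_cancel_left] at h1'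
  · show HH α ((p.2 * p.1⁻¹ * (s.2 ⊔ p.1))⁻¹ * (q.2 * q.1⁻¹ * (s.2 ⊔ q.1)))
    rw [show (p.2 * p.1⁻¹ * (s.2 ⊔ p.1))⁻¹ * (q.2 * q.1⁻¹ * (s.2 ⊔ q.1))
        = (p.2⁻¹ * q.2) * ((p.1⁻¹ * q.1)⁻¹ * ((s.2 ⊔ p.1)⁻¹ * (s.2 ⊔ q.1)))
        by simp [mul_assoc, mul_comm, mul_left_comm, mul_inv_rev]]
    refine HH_mul h2 (HH_mul (HH_inv h1) ?_)
    have h1' := HH_ratio hα s.2 p.1 h1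
    rwa [mul_inv_cancel_left] at h1'

lemma crel_right (hα : 1 ≤ α) (s : G × G) {p q : G × G} (h : crel α p q) :
    crel α (Smul p s) (Smul q s) := by
  obtain ⟨h1, h2⟩ := h
  rw [sgMax p s, sgMax q s]
  have hsup : HH α ((p.2 ⊔ s.1)⁻¹ * (q.2 ⊔ s.1)) := by
    have h2' := HH_ratio hα s.1 p.2 h2
    rw [mul_inv_cancel_left] at h2'
    rwa [sup_comm s.1 p.2, sup_comm s.1 q.2] at h2'
  constructor
  · show HH α ((p.1 * p.2⁻¹ * (p.2 ⊔ s.1))⁻¹ * (q.1 * q.2⁻¹ * (q.2 ⊔ s.1)))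
    rw [show (p.1 * p.2⁻¹ * (p.2 ⊔ s.1))⁻¹ * (q.1 * q.2⁻¹ * (q.2 ⊔ s.1))
        = (p.1⁻¹ * q.1) * ((p.2⁻¹ * q.2)⁻¹ * ((p.2 ⊔ s.1)⁻¹ * (q.2 ⊔ s.1)))
        by simp [mul_assoc, mul_comm, mul_left_comm, mul_inv_rev]]
    exact HH_mul h1 (HH_mul (HH_inv h2) hsup)
  · show HH α ((s.2 * s.1⁻¹ * (p.2 ⊔ s.1))⁻¹ * (s.2 * s.1⁻¹ * (q.2 ⊔ s.1)))
    rw [show (s.2 * s.1⁻¹ * (p.2 ⊔ s.1))⁻¹ * (s.2 * s.1⁻¹ * (q.2 ⊔ s.1))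
        = (p.2 ⊔ s.1)⁻¹ * (q.2 ⊔ s.1) by group]
    exact hsup

end MyAux2

section MyAux3
variable {G : Type*} [CommGroup G] [LinearOrder G] [IsOrderedMonoid G]

lemma idem_c_e {S : Type*} {m : S → S → S}
    (hassoc : ∀ a b c', m (m a b) c' = m a (m b c'))
    {c : S → S → Prop} (hc : IsSgCongruence m c) {e : S}
    (hid : ∀ x, c (m e x) x ∧ c (m x e) x)
    {x : S} (hx : m x x = x) {y : S} (hy : c (m x y) e) : c x e := by
  have h1 : c (m x (m x y)) (m x e) := (hc.2 (m x y) e x hy).1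
  rw [← hassoc, hx] at h1
  exact hc.1.trans (hc.1.trans (hc.1.symm (hid x).2) (hc.1.symm h1)) hy

lemma exists_of_not_arch (h : ¬ IsArchGroup G) :
    ∃ α β : G, 1 < α ∧ ∀ n : ℕ, α ^ n < β := by
  have h' : ∃ a b : G, 1 < a ∧ 1 < b ∧
      ¬((∃ mm : ℕ, 0 < mm ∧ b ≤ a ^ mm) ∧ ∃ n : ℕ, 0 < n ∧ a ≤ b ^ n) := by
    by_contra hcc
    push_neg at hcc
    exact h fun a b ha hb => hcc a b ha hb
  obtain ⟨a, b, ha, hb, hab⟩ := h'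
  by_cases hA : ∃ mm : ℕ, 0 < mm ∧ b ≤ a ^ mm
  · have hB : ¬ ∃ n : ℕ, 0 < n ∧ a ≤ b ^ n := fun hB => hab ⟨hA, hB⟩
    push_neg at hB
    refine ⟨b, a, hb, fun n => ?_⟩
    rcases Nat.eq_zero_or_pos n with rfl | hn
    · simpa using ha
    · exact hB n hn
  · push_neg at hA
    refine ⟨a, b, ha, fun n => ?_⟩
    rcases Nat.eq_zero_or_pos n with rfl | hn
    · simpa using hb
    · exact hA n hn

theorem nonarch_no {α β : G} (hα : 1 < α) (hβ : ∀ n : ℕ, α ^ n < β)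
    {S : Type*} (ι : S → G × G) (hι : Function.Injective ι)
    (m : S → S → S) (hm : ∀ x y, ι (m x y) = Smul (ι x) (ι y))
    (hmk : ∀ p : G × G, 1 ≤ p.1 → 1 ≤ p.2 → ∃ s, ι s = p) :
    ∃ c : S → S → Prop, IsSgCongruence m c ∧ IsNontrivialRel c ∧ ¬ IsGroupCongruence m c := by
  classical
  have hβ1 : (1 : G) < β := by simpa using hβ 0
  have hcong : IsSgCongruence m (fun s s' => crel α (ι s) (ι s')) := by
    refine ⟨⟨fun s => crel_refl _, fun h => crel_symm h, fun h h' => crel_trans h h'⟩,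
      fun x y s h => ⟨?_, ?_⟩⟩
    · show crel α (ι (m s x)) (ι (m s y))
      rw [hm, hm]
      exact crel_left hα.le (ι s) h
    · show crel α (ι (m x s)) (ι (m y s))
      rw [hm, hm]
      exact crel_right hα.le (ι s) h
  obtain ⟨s0, hs0⟩ := hmk (1, 1) le_rfl le_rfl
  obtain ⟨s1, hs1⟩ := hmk (1, α) le_rfl hα.le
  obtain ⟨s2, hs2⟩ := hmk (1, β) le_rfl hβ1.le
  have hHα : HH α α := ⟨1, by simp, by
    simpa using (inv_le_one'.2 hα.le).trans hα.le⟩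
  refine ⟨fun s s' => crel α (ι s) (ι s'), hcong, ⟨⟨s0, s1, ?_, ?_⟩, ⟨s0, s2, ?_⟩⟩, ?_⟩
  · show crel α (ι s0) (ι s1)
    rw [hs0, hs1]
    constructor
    · show HH α ((1 : G)⁻¹ * 1)
      simpa using (HH_one (α := α))
    · show HH α ((1 : G)⁻¹ * α)
      simpa using hHα
  · intro hEq
    have := congrArg ι hEq
    rw [hs0, hs1] at this
    exact hα.ne ((Prod.ext_iff.1 this).2)
  · show ¬ crel α (ι s0) (ι s2)
    rw [hs0, hs2]
    rintro ⟨-, h2⟩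
    have h2' : HH α β := by
      have : ((1 : G), (1 : G)).2⁻¹ * ((1 : G), β).2 = β := by simp
      rwa [this] at h2
    obtain ⟨n, hn, -⟩ := h2'
    exact absurd hn (not_le.2 (hβ n))
  · rintro ⟨e, hid, hinv⟩
    have massoc : ∀ a b c', m (m a b) c' = m a (m b c') := fun a b c' =>
      hι (by rw [hm, hm, hm, hm, sgAssoc])
    obtain ⟨sβ, hsβ⟩ := hmk (β, β) hβ1.le hβ1.le
    have h0 : m s0 s0 = s0 := hι (by rw [hm, hs0]; exact sgEq 1 1 1)
    have hββ : m sβ sβ = sβ := hι (by rw [hm, hsβ]; exact sgEq β β β)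
    obtain ⟨y0, hy0, -⟩ := hinv s0
    obtain ⟨yβ, hyβ, -⟩ := hinv sβ
    have h0e : crel α (ι s0) (ι e) := idem_c_e massoc hcong hid h0 hy0
    have hβe : crel α (ι sβ) (ι e) := idem_c_e massoc hcong hid hββ hyβ
    have hfin : crel α (ι s0) (ι sβ) := crel_trans h0e (crel_symm hβe)
    rw [hs0, hsβ] at hfin
    obtain ⟨-, h2⟩ := hfin
    have h2' : HH α β := by
      have : ((1 : G), (1 : G)).2⁻¹ * (β, β).2 = β := by simp
      rwa [this] at h2
    obtain ⟨n, hn, -⟩ := h2'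
    exact absurd hn (not_le.2 (hβ n))

end MyAux3

section MyAux4
variable {G : Type*} [CommGroup G] [LinearOrder G] [IsOrderedMonoid G]

theorem arch_yes (harch : IsArchGroup G)
    {S : Type*} (ι : S → G × G) (hι : Function.Injective ι)
    (m : S → S → S) (hm : ∀ x y, ι (m x y) = Smul (ι x) (ι y))
    (Q : G → Prop) (hQ1 : Q 1) (hQm : ∀ a b, Q a → Q b → Q (a * b))
    (hQneg : ∀ a, Q a → a < 1 → Q a⁻¹)
    (hQs : ∀ s, Q (ι s).1 ∧ Q (ι s).2)
    (hmk : ∀ a b, Q a → Q b → ∃ s, ι s = (a, b))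
    (c : S → S → Prop) (hc : IsSgCongruence m c) (hnt : IsNontrivialRel c) :
    IsGroupCongruence m c := by
  classical
  let R : G × G → G × G → Prop := fun p q => ∃ sp sq, ι sp = p ∧ ι sq = q ∧ c sp sq
  have toc : ∀ {s s' : S}, R (ι s) (ι s') → c s s' := by
    rintro s s' ⟨a, b, ha, hb, hab⟩
    rwa [hι ha, hι hb] at hab
  have Rrefl : ∀ a b : G, Q a → Q b → R (a, b) (a, b) := by
    intro a b ha hb
    obtain ⟨s, hs⟩ := hmk a b ha hb
    exact ⟨s, s, hs, hs, hc.1.refl s⟩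
  have Rsymm : ∀ {p q}, R p q → R q p := by
    rintro p q ⟨sp, sq, hp, hq, h⟩
    exact ⟨sq, sp, hq, hp, hc.1.symm h⟩
  have Rtrans : ∀ {p q r}, R p q → R q r → R p r := by
    rintro p q r ⟨s1, s2, h1, h2, h12⟩ ⟨s3, s4, h3, h4, h34⟩
    refine ⟨s1, s4, h1, h4, hc.1.trans h12 ?_⟩
    rwa [hι (h3.trans h2.symm)] at h34
  have RmulL : ∀ (a b : G) {p q}, Q a → Q b → R p q → R (Smul (a, b) p) (Smul (a, b) q) := by
    rintro a b p q ha hb ⟨s1, s2, h1, h2, h12⟩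
    obtain ⟨t, ht⟩ := hmk a b ha hb
    exact ⟨m t s1, m t s2, by rw [hm, ht, h1], by rw [hm, ht, h2], (hc.2 s1 s2 t h12).1⟩
  have RmulR : ∀ (a b : G) {p q}, Q a → Q b → R p q → R (Smul p (a, b)) (Smul q (a, b)) := by
    rintro a b p q ha hb ⟨s1, s2, h1, h2, h12⟩
    obtain ⟨t, ht⟩ := hmk a b ha hb
    exact ⟨m s1 t, m s2 t, by rw [hm, ht, h1], by rw [hm, ht, h2], (hc.2 s1 s2 t h12).2⟩
  have Qpair : ∀ a b a' b' : G, Q a → Q b → Q a' → Q b' →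
      Q (Smul (a, b) (a', b')).1 ∧ Q (Smul (a, b) (a', b')).2 := by
    intro a b a' b' ha hb ha' hb'
    obtain ⟨sp, hsp⟩ := hmk a b ha hb
    obtain ⟨sq, hsq⟩ := hmk a' b' ha' hb'
    have h : ι (m sp sq) = Smul (a, b) (a', b') := by rw [hm, hsp, hsq]
    have := hQs (m sp sq)
    rwa [h] at this
  -- core: extract a congruent pair of idempotents from a nontrivial pair
  have zcore : ∀ a b cc d : G, Q a → Q b → Q cc → Q d → R (a, b) (cc, d) →
      (a, b) ≠ (cc, d) → ¬(cc < a ∧ a * cc⁻¹ * d = b) →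
      ∃ q, 1 < q ∧ Q q ∧ R ((1 : G), (1 : G)) (q, q) := by
    intro a b cc d ha hb hcc hd hr hne hdeg
    have h1 := RmulL 1 a hQ1 ha hr
    rw [sgEq] at h1
    have h2 := RmulR b 1 hb hQ1 h1
    rw [sgEq] at h2
    -- h2 : R (1,1) (Smul (Smul (1,a) (cc,d)) (b,1))
    have hz0 : Smul ((1 : G), a) (cc, d) = (a⁻¹ * (a ⊔ cc), d * cc⁻¹ * (a ⊔ cc)) := by
      rw [sgMax]; simp
    have hz : Smul (a⁻¹ * (a ⊔ cc), d * cc⁻¹ * (a ⊔ cc)) ((b : G), 1)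
        = (a⁻¹ * (a ⊔ cc) * (d * cc⁻¹ * (a ⊔ cc))⁻¹ * (d * cc⁻¹ * (a ⊔ cc) ⊔ b),
           b⁻¹ * (d * cc⁻¹ * (a ⊔ cc) ⊔ b)) := by
      rw [sgMax]; simp
    rw [hz0, hz] at h2
    have hz2pos : (1 : G) ≤ b⁻¹ * (d * cc⁻¹ * (a ⊔ cc) ⊔ b) := by
      calc (1 : G) = b⁻¹ * b := (inv_mul_cancel b).symm
        _ ≤ b⁻¹ * (d * cc⁻¹ * (a ⊔ cc) ⊔ b) := mul_le_mul_right le_sup_right _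
    have hz1pos : (1 : G) ≤ a⁻¹ * (a ⊔ cc) * (d * cc⁻¹ * (a ⊔ cc))⁻¹ * (d * cc⁻¹ * (a ⊔ cc) ⊔ b) := by
      calc (1 : G) = a⁻¹ * a := (inv_mul_cancel a).symm
        _ ≤ a⁻¹ * (a ⊔ cc) := mul_le_mul_right le_sup_left _
        _ = a⁻¹ * (a ⊔ cc) * (d * cc⁻¹ * (a ⊔ cc))⁻¹ * (d * cc⁻¹ * (a ⊔ cc)) := by group
        _ ≤ a⁻¹ * (a ⊔ cc) * (d * cc⁻¹ * (a ⊔ cc))⁻¹ * (d * cc⁻¹ * (a ⊔ cc) ⊔ b) :=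
            mul_le_mul_right le_sup_left _
    have hQz : Q (a⁻¹ * (a ⊔ cc) * (d * cc⁻¹ * (a ⊔ cc))⁻¹ * (d * cc⁻¹ * (a ⊔ cc) ⊔ b))
        ∧ Q (b⁻¹ * (d * cc⁻¹ * (a ⊔ cc) ⊔ b)) := by
      have h5 := Qpair 1 a cc d hQ1 ha hcc hd
      rw [hz0] at h5
      have h6 := Qpair (a⁻¹ * (a ⊔ cc)) (d * cc⁻¹ * (a ⊔ cc)) b 1 h5.1 h5.2 hb hQ1
      rwa [hz] at h6
    have hzne : (a⁻¹ * (a ⊔ cc) * (d * cc⁻¹ * (a ⊔ cc))⁻¹ * (d * cc⁻¹ * (a ⊔ cc) ⊔ b),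
        b⁻¹ * (d * cc⁻¹ * (a ⊔ cc) ⊔ b)) ≠ ((1 : G), (1 : G)) := by
      intro hEq
      rw [Prod.mk.injEq] at hEq
      obtain ⟨hE1, hE2⟩ := hEq
      have hwb : b = d * cc⁻¹ * (a ⊔ cc) ⊔ b := by rwa [inv_mul_eq_one] at hE2
      have hBb : d * cc⁻¹ * (a ⊔ cc) ≤ b := sup_eq_right.1 hwb.symm
      have h9 : a⁻¹ * (a ⊔ cc) * (d * cc⁻¹ * (a ⊔ cc))⁻¹ * b = 1 := by
        rw [hwb]; exact hE1
      have h10 : b = (a⁻¹ * (a ⊔ cc) * (d * cc⁻¹ * (a ⊔ cc))⁻¹)⁻¹ :=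
        eq_inv_of_mul_eq_one_right h9
      rw [show (a⁻¹ * (a ⊔ cc) * (d * cc⁻¹ * (a ⊔ cc))⁻¹)⁻¹ = d * cc⁻¹ * (a ⊔ cc) * (a ⊔ cc)⁻¹ * a
          by group] at h10
      rw [show d * cc⁻¹ * (a ⊔ cc) * (a ⊔ cc)⁻¹ * a = a * cc⁻¹ * d
          by simp [mul_assoc, mul_comm, mul_left_comm]] at h10
      -- h10 : b = a * cc⁻¹ * d
      have h11 : d * cc⁻¹ * (a ⊔ cc) ≤ d * cc⁻¹ * a := by
        have h12 := hBb
        rw [h10, show a * cc⁻¹ * d = d * cc⁻¹ * a by simp [mul_assoc, mul_comm, mul_left_comm]]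
          at h12
        exact h12
      have hMa : a ⊔ cc ≤ a := le_of_mul_le_mul_left' h11
      have hcca : cc ≤ a := le_sup_right.trans hMa
      rcases eq_or_lt_of_le hcca with hEq2 | hlt2
      · apply hne
        rw [Prod.mk.injEq]
        refine ⟨hEq2.symm, ?_⟩
        rw [h10, ← hEq2]
        simp
      · exact hdeg ⟨hlt2, h10.symm⟩
    rcases lt_or_eq_of_le hz2pos with hlt | heq
    · refine ⟨_, hlt, hQz.2, ?_⟩
      have h3 := RmulR _ _ hQz.2 hQz.2 h2
      rw [sgLt _ _ hlt, sgEq] at h3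
      simp only [inv_one, mul_one, one_mul] at h3
      exact Rtrans h2 (Rsymm h3)
    · have hz1lt : (1 : G) <
          a⁻¹ * (a ⊔ cc) * (d * cc⁻¹ * (a ⊔ cc))⁻¹ * (d * cc⁻¹ * (a ⊔ cc) ⊔ b) := by
        rcases lt_or_eq_of_le hz1pos with h | h
        · exact h
        · exact absurd (by rw [← h, ← heq]) hzne
      refine ⟨_, hz1lt, hQz.1, ?_⟩
      have h3 := RmulL _ _ hQz.1 hQz.1 h2
      rw [sgGt _ _ hz1lt, sgEq] at h3
      simp only [inv_one, mul_one, one_mul] at h3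
      exact Rtrans h2 (Rsymm h3)
  obtain ⟨⟨x, y, hxy, hxyne⟩, -⟩ := hnt
  rcases hpx : ι x with ⟨a, b⟩
  rcases hpy : ι y with ⟨cc, d⟩
  have hQa : Q a := by have := (hQs x).1; rwa [hpx] at this
  have hQb : Q b := by have := (hQs x).2; rwa [hpx] at this
  have hQcc : Q cc := by have := (hQs y).1; rwa [hpy] at this
  have hQd : Q d := by have := (hQs y).2; rwa [hpy] at this
  have hRxy : R (a, b) (cc, d) := ⟨x, y, hpx, hpy, hxy⟩
  have hpne : (a, b) ≠ (cc, d) := fun hEq => hxyne (hι (by rw [hpx, hpy, hEq]))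
  obtain ⟨q, hq1, hQq, hRq⟩ : ∃ q, 1 < q ∧ Q q ∧ R ((1 : G), (1 : G)) (q, q) := by
    by_cases hdeg : cc < a ∧ a * cc⁻¹ * d = b
    · exact zcore cc d a b hQcc hQd hQa hQb (Rsymm hRxy) (Ne.symm hpne)
        (fun h => absurd h.1 (not_lt.2 hdeg.1.le))
    · exact zcore a b cc d hQa hQb hQcc hQd hRxy hpne hdeg
  have shift : ∀ g u v : G, 1 < g → Q g → Q u → Q v → R ((1 : G), (1 : G)) (g, g) →
      R (u, v) (g * u, g * v) := by
    intro g u v hg hQg hQu hQv hRg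
    have h1 := RmulL u 1 hQu hQ1 hRg
    rw [sgEq, sgLt _ _ hg] at h1
    simp only [inv_one, mul_one, one_mul] at h1
    have h2 := RmulR 1 v hQ1 hQv h1
    rw [sgEq, sgGt _ _ hg] at h2
    simp only [inv_one, mul_one, one_mul] at h2
    exact h2
  have Qpow : ∀ n : ℕ, Q (q ^ n) := by
    intro n
    induction n with
    | zero => simpa using hQ1
    | succ n ih => rw [pow_succ]; exact hQm _ _ ih hQq
  have shiftn : ∀ (n : ℕ) (u v : G), Q u → Q v → R (u, v) (q ^ n * u, q ^ n * v) := by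
    intro n
    induction n with
    | zero =>
      intro u v hu hv
      simpa using Rrefl u v hu hv
    | succ n ih =>
      intro u v hu hv
      have h1 := ih u v hu hv
      have h2 := shift q (q ^ n * u) (q ^ n * v) hq1 hQq
        (hQm _ _ (Qpow n) hu) (hQm _ _ (Qpow n) hv) hRq
      have e : ∀ w : G, q * (q ^ n * w) = q ^ (n + 1) * w := by
        intro w
        rw [pow_succ']
        rw [mul_assoc]
      rw [e u, e v] at h2
      exact Rtrans h1 h2
  have idem_le : ∀ s t : G, Q s → Q t → s ≤ t → R (s, s) (t, t) := by
    intro s t hs ht hst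
    rcases eq_or_lt_of_le hst with rfl | hlt
    · exact Rrefl s s hs hs
    · have h1 : (1 : G) < s⁻¹ * t := by simpa using mul_lt_mul_right hlt s⁻¹
      obtain ⟨k, -, hk⟩ := (harch q (s⁻¹ * t) hq1 h1).1
      have htle : t ≤ q ^ k * s := by
        have h2 := mul_le_mul_left hk s
        rwa [show s⁻¹ * t * s = t by simp [mul_assoc, mul_comm, mul_left_comm]] at h2
      have h2 := shiftn k s s hs hs
      have h3 := RmulL t t ht ht h2
      have e1 : Smul (t, t) (s, s) = (t, t) := by
        rw [sgGt _ _ hlt]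
        simp
      have e2 : Smul (t, t) (q ^ k * s, q ^ k * s) = (q ^ k * s, q ^ k * s) := by
        rcases eq_or_lt_of_le htle with hEq | hlt2
        · rw [← hEq]; exact sgEq _ _ _
        · rw [sgLt _ _ hlt2]
          simp
      rw [e1, e2] at h3
      exact Rtrans h2 (Rsymm h3)
  have idemAll : ∀ s t : G, Q s → Q t → R (s, s) (t, t) := by
    intro s t hs ht
    rcases le_total s t with h | h
    · exact idem_le s t hs ht h
    · exact Rsymm (idem_le t s ht hs h)
  obtain ⟨e, he⟩ := hmk 1 1 hQ1 hQ1
  refine ⟨e, ?_, ?_⟩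
  · intro s
    rcases hps : ι s with ⟨a', b'⟩
    have hQa' : Q a' := by have := (hQs s).1; rwa [hps] at this
    have hQb' : Q b' := by have := (hQs s).2; rwa [hps] at this
    constructor
    · apply toc
      rw [hm, he, hps]
      rcases lt_trichotomy (1 : G) a' with h | h | h
      · rw [sgLt _ _ h]
        simp only [inv_one, mul_one, one_mul]
        exact Rrefl a' b' hQa' hQb'
      · rw [← h, sgEq]
        exact Rrefl 1 b' hQ1 hQb'
      · rw [sgGt _ _ h]
        simp only [inv_one, mul_one, one_mul]
        have hQai : Q a'⁻¹ := hQneg a' hQa' h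
        have hg1 : (1 : G) < a'⁻¹ := one_lt_inv_of_inv h
        have h2 := shift a'⁻¹ a' b' hg1 hQai hQa' hQb' (idemAll 1 a'⁻¹ hQ1 hQai)
        rw [inv_mul_cancel] at h2
        exact Rsymm h2
    · apply toc
      rw [hm, he, hps]
      rcases lt_trichotomy (1 : G) b' with h | h | h
      · rw [sgGt _ _ h]
        simp only [inv_one, mul_one, one_mul]
        exact Rrefl a' b' hQa' hQb'
      · rw [← h, sgEq]
        exact Rrefl a' 1 hQa' hQ1
      · rw [sgLt _ _ h]
        simp only [inv_one, mul_one, one_mul]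
        have hQbi : Q b'⁻¹ := hQneg b' hQb' h
        have hg1 : (1 : G) < b'⁻¹ := one_lt_inv_of_inv h
        have h2 := shift b'⁻¹ a' b' hg1 hQbi hQa' hQb' (idemAll 1 b'⁻¹ hQ1 hQbi)
        rw [inv_mul_cancel] at h2
        exact Rsymm h2
  · intro s
    rcases hps : ι s with ⟨a', b'⟩
    have hQa' : Q a' := by have := (hQs s).1; rwa [hps] at this
    have hQb' : Q b' := by have := (hQs s).2; rwa [hps] at this
    obtain ⟨t, ht⟩ := hmk b' a' hQb' hQa'
    refine ⟨t, ?_, ?_⟩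
    · apply toc
      rw [hm, he, hps, ht, sgEq]
      exact idemAll a' 1 hQa' hQ1
    · apply toc
      rw [hm, he, hps, ht, sgEq]
      exact idemAll b' 1 hQb' hQ1

end MyAux4


/-- For a commutative linearly ordered group `G`, the following are equivalent:
(i) `G` is archimedean; (ii) every non-trivial congruence on `S_G` is a group
congruence; (iii) every non-trivial congruence on `S_G⁺` is a group congruence. -/
theorem stmt10 {G : Type*} [CommGroup G] [LinearOrder G] [IsOrderedMonoid G] :
    (IsArchGroup G ↔
      ∀ c : (G × G) → (G × G) → Prop,
        IsSgCongruence (Smul (G := G)) c → IsNontrivialRel c →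
          IsGroupCongruence (Smul (G := G)) c) ∧
    (IsArchGroup G ↔
      ∀ c : PosS G → PosS G → Prop,
        IsSgCongruence (SmulP (G := G)) c → IsNontrivialRel c →
          IsGroupCongruence (SmulP (G := G)) c) := by
  constructor
  · constructor
    · intro ha c hc hnt
      exact arch_yes ha id Function.injective_id Smul (fun _ _ => rfl)
        (fun _ => True) trivial (fun _ _ _ _ => trivial) (fun _ _ _ => trivial)
        (fun _ => ⟨trivial, trivial⟩) (fun a b _ _ => ⟨(a, b), rfl⟩) c hc hnt
    · intro h
      by_contra hna
      obtain ⟨α, β, hα, hβ⟩ := exists_of_not_arch hna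
      obtain ⟨c, h1, h2, h3⟩ := nonarch_no hα hβ id Function.injective_id Smul
        (fun _ _ => rfl) (fun p _ _ => ⟨p, rfl⟩)
      exact h3 (h c h1 h2)
  · constructor
    · intro ha c hc hnt
      exact arch_yes ha Subtype.val Subtype.val_injective SmulP (fun _ _ => rfl)
        (fun g => 1 ≤ g) le_rfl (fun a b ha' hb' => one_le_mul ha' hb')
        (fun a ha' h' => absurd h' (not_lt.2 ha'))
        (fun s => s.2) (fun a b ha' hb' => ⟨⟨(a, b), ha', hb'⟩, rfl⟩) c hc hnt
    · intro h
      by_contra hna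
      obtain ⟨α, β, hα, hβ⟩ := exists_of_not_arch hna
      obtain ⟨c, h1, h2, h3⟩ := nonarch_no hα hβ Subtype.val Subtype.val_injective SmulP
        (fun _ _ => rfl) (fun p h1 h2 => ⟨⟨p, h1, h2⟩, rfl⟩)
      exact h3 (h c h1 h2)
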